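/- arXiv:2202.04997 — 2 statements merged into one kernel-verified Lean document; each statement's English description precedes it below -/
import Mathlib

section
/- A graph G on n vertices satisfies F(G) = n - 1 if and only if G has an isolated vertex. -/
namespace ZeroForcing

/-- One step of the zero forcing process: all vertices forced from blue set `S`
(a blue vertex with exactly one white neighbor forces that neighbor). -/
def step {V : Type*} (G : SimpleGraph V) (S : Set V) : Set V :=
  S ∪ {v | ∃ u ∈ S, G.Adj u v ∧ ∀ w, G.Adj u w → w ∉ S → w = v}

/-- `S` is a zero forcing set: iterating the color-change rule makes everything blue. -/
def IsZeroForcingSet {V : Type*} (G : SimpleGraph V) (S : Set V) : Prop :=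
  ∃ k, (step G)^[k] S = Set.univ

/-- `S` is a failed zero forcing set. -/
def IsFailedSet {V : Type*} (G : SimpleGraph V) (S : Set V) : Prop :=
  ¬ IsZeroForcingSet G S

/-- The zero forcing number `Z(G)`. -/
noncomputable def Z {V : Type*} (G : SimpleGraph V) : ℕ :=
  sInf {k | ∃ S : Set V, S.ncard = k ∧ IsZeroForcingSet G S}

/-- The failed zero forcing number `F(G)`. -/
noncomputable def F {V : Type*} (G : SimpleGraph V) : ℕ :=
  sSup {k | ∃ S : Set V, S.ncard = k ∧ IsFailedSet G S}

/-- The strong product of two simple graphs. -/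
def strongProd {α β : Type*} (G : SimpleGraph α) (H : SimpleGraph β) :
    SimpleGraph (α × β) where
  Adj x y := x ≠ y ∧ (x.1 = y.1 ∨ G.Adj x.1 y.1) ∧ (x.2 = y.2 ∨ H.Adj x.2 y.2)
  symm := by
    constructor
    rintro x y ⟨h1, h2, h3⟩
    exact ⟨h1.symm, h2.imp Eq.symm (fun h => G.adj_symm h), h3.imp Eq.symm (fun h => H.adj_symm h)⟩
  loopless := ⟨fun x h => h.1 rfl⟩

/-- The lexicographic product of two simple graphs. -/
def lexProd {α β : Type*} (G : SimpleGraph α) (H : SimpleGraph β) :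
    SimpleGraph (α × β) where
  Adj x y := G.Adj x.1 y.1 ∨ (x.1 = y.1 ∧ H.Adj x.2 y.2)
  symm := by
    constructor
    rintro x y (h | ⟨h1, h2⟩)
    · exact Or.inl h.symm
    · exact Or.inr ⟨h1.symm, h2.symm⟩
  loopless := by
    constructor
    rintro x (h | ⟨h1, h2⟩)
    · exact G.irrefl h
    · exact H.irrefl h2

/-- The corona `G ∘ H`: one copy of `G` and, for each vertex `a` of `G`, a copy of `H`
all of whose vertices are joined to `a`. -/
def corona {α β : Type*} (G : SimpleGraph α) (H : SimpleGraph β) :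
    SimpleGraph (α ⊕ α × β) where
  Adj x y :=
    match x, y with
    | .inl a, .inl a' => G.Adj a a'
    | .inl a, .inr p => a = p.1
    | .inr p, .inl a' => p.1 = a'
    | .inr p, .inr q => p.1 = q.1 ∧ H.Adj p.2 q.2
  symm := by
    constructor
    rintro (a | p) (a' | q) h
    · exact G.adj_symm h
    · exact h.symm
    · exact h.symm
    · exact ⟨h.1.symm, H.adj_symm h.2⟩
  loopless := by
    constructor
    rintro (a | p) h
    · exact G.irrefl h
    · exact H.irrefl h.2

end ZeroForcing


section Aux
open ZeroForcing Set

lemma ZF_subset_step {V : Type*} (G : SimpleGraph V) (S : Set V) : S ⊆ step G S :=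
  Set.subset_union_left

lemma ZF_failed_empty {V : Type*} [Nonempty V] (G : SimpleGraph V) :
    IsFailedSet G (∅ : Set V) := by
  rintro ⟨k, hk⟩
  have hstep : step G (∅ : Set V) = ∅ := by
    ext x; simp [step]
  have : (step G)^[k] (∅ : Set V) = ∅ := Function.iterate_fixed hstep k
  rw [this] at hk
  exact (Set.empty_ne_univ hk)

lemma ZF_bdd {V : Type*} [Fintype V] (G : SimpleGraph V) :
    BddAbove {k | ∃ S : Set V, S.ncard = k ∧ IsFailedSet G S} := by
  refine ⟨Fintype.card V, ?_⟩
  rintro k ⟨S, hS, -⟩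
  have := Set.ncard_le_ncard (Set.subset_univ S) Set.finite_univ
  rwa [hS, Set.ncard_univ, Nat.card_eq_fintype_card] at this

end Aux

theorem failed_zf_eq_card_sub_one_iff_isolated {V : Type*} [Fintype V] [Nonempty V]
    (G : SimpleGraph V) :
    ZeroForcing.F G = Fintype.card V - 1 ↔ ∃ v : V, ∀ w : V, ¬ G.Adj v w := by
  classical
  have hne : {k | ∃ S : Set V, S.ncard = k ∧ ZeroForcing.IsFailedSet G S}.Nonempty :=
    ⟨0, ∅, by simp, ZF_failed_empty G⟩
  have hbdd := ZF_bdd G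
  constructor
  · intro hF
    have hmem : ZeroForcing.F G ∈ {k | ∃ S : Set V, S.ncard = k ∧ ZeroForcing.IsFailedSet G S} :=
      Nat.sSup_mem hne hbdd
    rw [hF] at hmem
    obtain ⟨S, hScard, hSfail⟩ := hmem
    have hcard : 1 ≤ Fintype.card V := Fintype.card_pos
    have hSlt : S.ncard < (Set.univ : Set V).ncard := by
      rw [hScard, Set.ncard_univ, Nat.card_eq_fintype_card]
      omega
    have hSne : S ≠ Set.univ := fun h => by rw [h] at hSlt; omega
    obtain ⟨v, hv⟩ : ∃ v, v ∉ S := by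
      by_contra h
      push_neg at h
      exact hSne (Set.eq_univ_of_forall h)
    have hins : insert v S = Set.univ := by
      apply Set.eq_of_subset_of_ncard_le (Set.subset_univ _) ?_ Set.finite_univ
      rw [Set.ncard_insert_of_notMem hv (Set.toFinite S), hScard,
        Set.ncard_univ, Nat.card_eq_fintype_card]
      omega
    have hall : ∀ w : V, w ≠ v → w ∈ S := by
      intro w hw
      have : w ∈ insert v S := hins ▸ Set.mem_univ w
      rcases this with h | h
      · exact absurd h hw
      · exact h
    refine ⟨v, fun w hadj => ?_⟩
    have hwv : w ≠ v := fun h => G.irrefl (v := v) (h ▸ hadj)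
    have hwS : w ∈ S := hall w hwv
    apply hSfail
    refine ⟨1, ?_⟩
    simp only [Function.iterate_one]
    apply Set.eq_univ_of_forall
    intro x
    by_cases hx : x ∈ S
    · exact Or.inl hx
    · have hxv : x = v := by
        by_contra h
        exact hx (hall x h)
      subst hxv
      exact Or.inr ⟨w, hwS, G.adj_symm hadj, fun z _ hz => by
        by_contra h; exact hz (hall z h)⟩
  · rintro ⟨v, hv⟩
    set S : Set V := Set.univ \ {v} with hSdef
    have hvnot : ∀ k : ℕ, v ∉ (ZeroForcing.step G)^[k] S := by
      intro k
      induction k with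
      | zero => simp [hSdef]
      | succ n ih =>
        rw [Function.iterate_succ_apply']
        rintro (h | ⟨u, _, hadj, _⟩)
        · exact ih h
        · exact hv u (G.adj_symm hadj)
    have hfail : ZeroForcing.IsFailedSet G S := by
      rintro ⟨k, hk⟩
      exact hvnot k (hk ▸ Set.mem_univ v)
    have hScard : S.ncard = Fintype.card V - 1 := by
      rw [hSdef, Set.ncard_diff (Set.subset_univ {v}), Set.ncard_univ,
        Nat.card_eq_fintype_card, Set.ncard_singleton]
    have hle : Fintype.card V - 1 ≤ ZeroForcing.F G :=
      le_csSup hbdd ⟨S, hScard, hfail⟩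
    have hge : ZeroForcing.F G ≤ Fintype.card V - 1 := by
      apply csSup_le hne
      rintro k ⟨T, hTcard, hTfail⟩
      have hTne : T ≠ Set.univ := by
        rintro rfl
        exact hTfail ⟨0, rfl⟩
      have : T.ncard < (Set.univ : Set V).ncard :=
        Set.ncard_lt_ncard ((Set.subset_univ T).ssubset_of_ne hTne) Set.finite_univ
      rw [hTcard, Set.ncard_univ, Nat.card_eq_fintype_card] at this
      omega
    omega
end

section
/- For integers m, n > 2, F(C_m □ C_n) ≥ ⌈mn/2⌉. -/
section FailedZFAux

open SimpleGraph

private lemma zf_val_one_lt {k : ℕ} [NeZero k] (hk : 2 < k) : ((1 : Fin k)).val = 1 := by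
  have h := Fin.val_one' k
  rw [Nat.mod_eq_of_lt (by omega)] at h
  exact h

private lemma zf_adj_add_one {k : ℕ} [NeZero k] (hk : 2 < k) (i : Fin k) :
    (cycleGraph k).Adj i (i + 1) := by
  rw [cycleGraph_adj']
  right
  have h : i + 1 - i = 1 := by abel
  rw [h, zf_val_one_lt hk]

private lemma zf_adj_sub_one {k : ℕ} [NeZero k] (hk : 2 < k) (i : Fin k) :
    (cycleGraph k).Adj i (i - 1) := by
  rw [cycleGraph_adj']
  left
  have h : i - (i - 1) = 1 := by abel
  rw [h, zf_val_one_lt hk]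

private lemma zf_exists_flip {k : ℕ} [NeZero k] (hk : 2 < k) (i : Fin k) :
    ∃ i' : Fin k, (cycleGraph k).Adj i i' ∧ (i.val + i'.val) % 2 = 1 := by
  rcases eq_or_ne i.val (k - 1) with h | h
  · refine ⟨i - 1, zf_adj_sub_one hk i, ?_⟩
    have h1 : (i - 1).val = (k - (1 : Fin k).val + i.val) % k := by rw [Fin.sub_def]
    rw [zf_val_one_lt hk] at h1
    have h3 : k - 1 + i.val = (k - 2) + 1 * k := by omega
    rw [h3, Nat.add_mul_mod_self_right, Nat.mod_eq_of_lt (by omega)] at h1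
    omega
  · refine ⟨i + 1, zf_adj_add_one hk i, ?_⟩
    have h1 : (i + 1).val = (i.val + (1 : Fin k).val) % k := by rw [Fin.add_def]
    rw [zf_val_one_lt hk] at h1
    have hi : i.val < k := i.isLt
    rw [Nat.mod_eq_of_lt (by omega)] at h1
    omega

private lemma zf_stall (m n : ℕ) (hm : 2 < m) (hn : 2 < n) :
    ZeroForcing.step ((cycleGraph m).boxProd (cycleGraph n))
      {p : Fin m × Fin n | (p.1.val + p.2.val) % 2 = 0}
    = {p : Fin m × Fin n | (p.1.val + p.2.val) % 2 = 0} := by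
  haveI : NeZero m := ⟨by omega⟩
  haveI : NeZero n := ⟨by omega⟩
  apply Set.union_eq_self_of_subset_right
  rintro v ⟨u, hu, hadj, hforce⟩
  simp only [Set.mem_setOf_eq] at hu
  obtain ⟨i', hi'adj, hi'⟩ := zf_exists_flip hm u.1
  obtain ⟨j', hj'adj, hj'⟩ := zf_exists_flip hn u.2
  have hw1 : ((cycleGraph m).boxProd (cycleGraph n)).Adj u (i', u.2) := by
    rw [boxProd_adj]; left; exact ⟨hi'adj, rfl⟩
  have hw2 : ((cycleGraph m).boxProd (cycleGraph n)).Adj u (u.1, j') := by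
    rw [boxProd_adj]; right; exact ⟨hj'adj, rfl⟩
  have hw1S : (i', u.2) ∉ {p : Fin m × Fin n | (p.1.val + p.2.val) % 2 = 0} := by
    simp only [Set.mem_setOf_eq]; omega
  have hw2S : (u.1, j') ∉ {p : Fin m × Fin n | (p.1.val + p.2.val) % 2 = 0} := by
    simp only [Set.mem_setOf_eq]; omega
  have e1 := hforce _ hw1 hw1S
  have e2 := hforce _ hw2 hw2S
  rw [← e2] at e1
  have : i' = u.1 := (Prod.ext_iff.mp e1).1
  exact absurd this.symm hi'adj.ne

private lemma zf_count_row (a n : ℕ) :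
    ((Finset.range n).filter (fun j => (a + j) % 2 = 0)).card
      = (if a % 2 = 0 then (n + 1) / 2 else n / 2) := by
  induction n with
  | zero => simp
  | succ n ih =>
    rw [Finset.range_add_one, Finset.filter_insert]
    by_cases h1 : (a + n) % 2 = 0
    · rw [if_pos h1, Finset.card_insert_of_notMem (by simp), ih]
      split_ifs <;> omega
    · rw [if_neg h1, ih]
      split_ifs <;> omega

private lemma zf_sum_rows (m A B : ℕ) :
    (∑ i ∈ Finset.range m, if i % 2 = 0 then A else B)
      = ((m + 1) / 2) * A + (m / 2) * B := by
  induction m with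
  | zero => simp
  | succ m ih =>
    rw [Finset.sum_range_succ, ih]
    by_cases h : m % 2 = 0
    · obtain ⟨c, rfl⟩ : ∃ c, m = 2 * c := ⟨m / 2, by omega⟩
      rw [if_pos h]
      have e1 : (2 * c + 1 + 1) / 2 = c + 1 := by omega
      have e2 : (2 * c + 1) / 2 = c := by omega
      have e3 : 2 * c / 2 = c := by omega
      rw [e1, e2, e3]
      ring
    · obtain ⟨c, rfl⟩ : ∃ c, m = 2 * c + 1 := ⟨m / 2, by omega⟩
      rw [if_neg h]
      have e1 : (2 * c + 1 + 1 + 1) / 2 = c + 1 := by omega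
      have e2 : (2 * c + 1 + 1) / 2 = c + 1 := by omega
      have e3 : (2 * c + 1) / 2 = c := by omega
      rw [e1, e2, e3]
      ring

private lemma zf_arith_id (m n : ℕ) :
    ((m + 1) / 2) * ((n + 1) / 2) + (m / 2) * (n / 2) = (m * n + 1) / 2 := by
  obtain ⟨a, ha⟩ : ∃ a, m = 2 * a ∨ m = 2 * a + 1 := ⟨m / 2, by omega⟩
  obtain ⟨b, hb⟩ : ∃ b, n = 2 * b ∨ n = 2 * b + 1 := ⟨n / 2, by omega⟩
  rcases ha with rfl | rfl <;> rcases hb with rfl | rfl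
  · have e : 2 * a * (2 * b) = 4 * (a * b) := by ring
    have e1 : (2 * a + 1) / 2 = a := by omega
    have e2 : (2 * b + 1) / 2 = b := by omega
    have e3 : 2 * a / 2 = a := by omega
    have e4 : 2 * b / 2 = b := by omega
    rw [e, e1, e2, e3, e4]
    generalize a * b = c
    omega
  · have e : 2 * a * (2 * b + 1) = 4 * (a * b) + 2 * a := by ring
    have e1 : (2 * a + 1) / 2 = a := by omega
    have e2 : (2 * b + 1 + 1) / 2 = b + 1 := by omega
    have e3 : 2 * a / 2 = a := by omega
    have e4 : (2 * b + 1) / 2 = b := by omega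
    rw [e, e1, e2, e3, e4]
    have e5 : a * (b + 1) + a * b = 2 * (a * b) + a := by ring
    rw [e5]
    generalize a * b = c
    omega
  · have e : (2 * a + 1) * (2 * b) = 4 * (a * b) + 2 * b := by ring
    have e1 : (2 * a + 1 + 1) / 2 = a + 1 := by omega
    have e2 : (2 * b + 1) / 2 = b := by omega
    have e3 : (2 * a + 1) / 2 = a := by omega
    have e4 : 2 * b / 2 = b := by omega
    rw [e, e1, e2, e3, e4]
    have e5 : (a + 1) * b + a * b = 2 * (a * b) + b := by ring
    rw [e5]
    generalize a * b = c
    omega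
  · have e : (2 * a + 1) * (2 * b + 1) = 4 * (a * b) + 2 * a + 2 * b + 1 := by ring
    have e1 : (2 * a + 1 + 1) / 2 = a + 1 := by omega
    have e2 : (2 * b + 1 + 1) / 2 = b + 1 := by omega
    have e3 : (2 * a + 1) / 2 = a := by omega
    have e4 : (2 * b + 1) / 2 = b := by omega
    rw [e, e1, e2, e3, e4]
    have e5 : (a + 1) * (b + 1) + a * b = 2 * (a * b) + a + b + 1 := by ring
    rw [e5]
    generalize a * b = c
    omega

private lemma zf_card_S (m n : ℕ) :
    ({p : Fin m × Fin n | (p.1.val + p.2.val) % 2 = 0} : Set _).ncard = (m * n + 1) / 2 := by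
  classical
  have hset : ({p : Fin m × Fin n | (p.1.val + p.2.val) % 2 = 0} : Set _) =
      ↑(Finset.univ.filter fun p : Fin m × Fin n => (p.1.val + p.2.val) % 2 = 0) := by
    ext p; simp
  rw [hset, Set.ncard_coe_finset, Finset.card_filter, ← Finset.univ_product_univ,
    Finset.sum_product]
  have inner : ∀ i : Fin m, (∑ j : Fin n, if (i.val + j.val) % 2 = 0 then 1 else 0)
      = if i.val % 2 = 0 then (n + 1) / 2 else n / 2 := by
    intro i
    rw [Fin.sum_univ_eq_sum_range (fun j => if (i.val + j) % 2 = 0 then 1 else 0),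
      ← Finset.card_filter]
    exact zf_count_row i.val n
  rw [Finset.sum_congr rfl (fun i _ => inner i),
    Fin.sum_univ_eq_sum_range (fun i => if i % 2 = 0 then (n + 1) / 2 else n / 2),
    zf_sum_rows, zf_arith_id]

end FailedZFAux

theorem failed_zf_torus_lower (m n : ℕ) (hm : 2 < m) (hn : 2 < n) :
    (m * n + 1) / 2 ≤
      ZeroForcing.F ((SimpleGraph.cycleGraph m).boxProd (SimpleGraph.cycleGraph n)) := by

  classical
  haveI : NeZero m := ⟨by omega⟩
  haveI : NeZero n := ⟨by omega⟩
  set G := (SimpleGraph.cycleGraph m).boxProd (SimpleGraph.cycleGraph n) with hG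
  set S : Set (Fin m × Fin n) := {p | (p.1.val + p.2.val) % 2 = 0} with hS
  have hstall : ZeroForcing.step G S = S := zf_stall m n hm hn
  have hiter : ∀ k, (ZeroForcing.step G)^[k] S = S := fun k => Function.iterate_fixed hstall k
  have hfail : ZeroForcing.IsFailedSet G S := by
    rintro ⟨k, hk⟩
    rw [hiter] at hk
    have hmem : ((⟨1, by omega⟩ : Fin m), (⟨0, by omega⟩ : Fin n)) ∈ S := by
      rw [hk]; exact Set.mem_univ _
    simp only [hS, Set.mem_setOf_eq] at hmem
    omega
  have hcard : S.ncard = (m * n + 1) / 2 := zf_card_S m n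
  have hbdd : BddAbove {k | ∃ T : Set (Fin m × Fin n), T.ncard = k ∧ ZeroForcing.IsFailedSet G T} := by
    refine ⟨Nat.card (Fin m × Fin n), ?_⟩
    rintro k ⟨T, rfl, -⟩
    have := Set.ncard_le_ncard (Set.subset_univ T) Set.finite_univ
    rwa [Set.ncard_univ] at this
  exact le_csSup hbdd ⟨S, hcard, hfail⟩
end
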